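/- Let g = g_{5,3,6(λ)}. For every F ∈ g*, the skew-symmetric bilinear form B_F has rank either 0 or 2; equivalently, the subspace {X ∈ g : F([X, Y]) = 0 for all Y ∈ g} has dimension 5 or 3. (This is the infinitesimal MD-condition: every coadjoint orbit of the corresponding connected simply connected Lie group G_{5,3,6(λ)} has dimension 0 or 2, so it is an MD5-group.) -/

import Mathlib

open scoped Matrix

/-- The Lie bracket of g_{5,3,6(λ)}: [X1,X2] = X3, [X2,X3] = X3, [X2,X4] = X3 + X4, [X2,X5] = λ·X5,
written in coordinates with respect to the basis (X₁, X₂, X₃, X₄, X₅) (all other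
brackets of basis vectors vanish); it is the bilinear extension of the structure
constants above. -/
def bracketg536 (l : ℝ) (U V : Fin 5 → ℝ) : Fin 5 → ℝ :=
  ![0, 0,
    (U 0 * V 1 - U 1 * V 0) + (U 1 * V 2 - U 2 * V 1) + (U 1 * V 3 - U 3 * V 1),
    U 1 * V 3 - U 3 * V 1,
    l * (U 1 * V 4 - U 4 * V 1)]

/-- The matrix (in the basis (X₁, ..., X₅)) of the skew-symmetric bilinear form
B_F(X, Y) = F([X, Y]); the functional F is identified with its coordinate vector with
respect to the dual basis, acting by the dot product. -/
def BFg536 (l : ℝ) (F : Fin 5 → ℝ) : Matrix (Fin 5) (Fin 5) ℝ :=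
  Matrix.of fun i j => F ⬝ᵥ bracketg536 l (Pi.single i 1) (Pi.single j 1)

/-- The radical {X ∈ g | F([X, Y]) = 0 for all Y ∈ g} of the form B_F, as a subspace. -/
def radg536 (l : ℝ) (F : Fin 5 → ℝ) : Submodule ℝ (Fin 5 → ℝ) where
  carrier := {X | ∀ Y : Fin 5 → ℝ, F ⬝ᵥ bracketg536 l X Y = 0}
  zero_mem' := by
    intro Y
    simp [bracketg536, dotProduct, Fin.sum_univ_five]
  add_mem' := by
    intro a b ha hb Y
    have h1 := ha Y
    have h2 := hb Y
    simp only [bracketg536, dotProduct, Fin.sum_univ_five, Matrix.cons_val_zero,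
      Matrix.cons_val_one, Matrix.head_cons, Matrix.cons_val_two, Matrix.tail_cons,
      Matrix.cons_val_three, Matrix.cons_val_four, Pi.add_apply] at h1 h2 ⊢
    linear_combination h1 + h2
  smul_mem' := by
    intro c a ha Y
    have h1 := ha Y
    simp only [bracketg536, dotProduct, Fin.sum_univ_five, Matrix.cons_val_zero,
      Matrix.cons_val_one, Matrix.head_cons, Matrix.cons_val_two, Matrix.tail_cons,
      Matrix.cons_val_three, Matrix.cons_val_four, Pi.smul_apply, smul_eq_mul] at h1 ⊢
    linear_combination c * h1

lemma dot_eq_g536 (l : ℝ) (F X Y : Fin 5 → ℝ) : F ⬝ᵥ bracketg536 l X Y =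
    F 2 * ((X 0 * Y 1 - X 1 * Y 0) + (X 1 * Y 2 - X 2 * Y 1) + (X 1 * Y 3 - X 3 * Y 1))
    + F 3 * (X 1 * Y 3 - X 3 * Y 1) + F 4 * (l * (X 1 * Y 4 - X 4 * Y 1)) := by
  simp [bracketg536, dotProduct, Fin.sum_univ_five]

lemma rad_iff_g536 (l : ℝ) (F X : Fin 5 → ℝ) :
    X ∈ radg536 l F ↔
      (F 2 * X 1 = 0 ∧ (F 2 + F 3) * X 1 = 0 ∧ F 4 * l * X 1 = 0 ∧
        F 2 * X 0 - F 2 * X 2 - (F 2 + F 3) * X 3 - F 4 * l * X 4 = 0) := by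
  show (∀ Y : Fin 5 → ℝ, F ⬝ᵥ bracketg536 l X Y = 0) ↔ _
  constructor
  · intro h
    have h1 := h ![0,1,0,0,0]; rw [dot_eq_g536] at h1
    have h2 := h ![0,0,1,0,0]; rw [dot_eq_g536] at h2
    have h3 := h ![0,0,0,1,0]; rw [dot_eq_g536] at h3
    have h4 := h ![0,0,0,0,1]; rw [dot_eq_g536] at h4
    simp only [Matrix.cons_val] at h1 h2 h3 h4
    norm_num at h1 h2 h3 h4
    refine ⟨?_, by linear_combination h3, ?_, by linear_combination h1⟩
    · rcases h2 with h | h <;> simp [h]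
    · rcases h4 with h | h | h <;> simp [h]
  · rintro ⟨h1, h2, h3, h4⟩ Y
    rw [dot_eq_g536]
    linear_combination (Y 2 - Y 0) * h1 + Y 3 * h2 + Y 4 * h3 + Y 1 * h4

lemma mulVec_eq_g536 (l : ℝ) (F X : Fin 5 → ℝ) : (BFg536 l F).mulVec X =
    ![F 2 * X 1,
      -(F 2 * X 0) + F 2 * X 2 + (F 2 + F 3) * X 3 + F 4 * l * X 4,
      -(F 2 * X 1), -((F 2 + F 3) * X 1), -(F 4 * l * X 1)] := by
  funext i
  fin_cases i <;>
    · simp [Matrix.mulVec, dotProduct, Fin.sum_univ_five, BFg536, bracketg536,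
        Pi.single_apply]
      try ring

lemma ker_iff_g536 (l : ℝ) (F X : Fin 5 → ℝ) :
    X ∈ LinearMap.ker (BFg536 l F).mulVecLin ↔
      (F 2 * X 1 = 0 ∧ (F 2 + F 3) * X 1 = 0 ∧ F 4 * l * X 1 = 0 ∧
        F 2 * X 0 - F 2 * X 2 - (F 2 + F 3) * X 3 - F 4 * l * X 4 = 0) := by
  rw [LinearMap.mem_ker, Matrix.mulVecLin_apply, mulVec_eq_g536]
  constructor
  · intro h
    have h0 := congrFun h 0
    have h1 := congrFun h 1
    have h3 := congrFun h 3
    have h4 := congrFun h 4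
    simp only [Matrix.cons_val_zero, Matrix.cons_val_one, Matrix.head_cons, Matrix.cons_val_two,
      Matrix.tail_cons, Matrix.cons_val_three, Matrix.cons_val_four, Pi.zero_apply,
      neg_eq_zero] at h0 h1 h3 h4
    exact ⟨h0, h3, h4, by linear_combination -h1⟩
  · rintro ⟨h1, h2, h3, h4⟩
    funext i
    fin_cases i
    · simpa using h1
    · have : -(F 2 * X 0) + F 2 * X 2 + (F 2 + F 3) * X 3 + F 4 * l * X 4 = 0 := by
        linear_combination -h4
      simpa using this
    · simp [h1]
    · simp [h2]
    · simp [h3]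

lemma ker_eq_rad_g536 (l : ℝ) (F : Fin 5 → ℝ) :
    LinearMap.ker (BFg536 l F).mulVecLin = radg536 l F :=
  Submodule.ext fun X => (ker_iff_g536 l F X).trans (rad_iff_g536 l F X).symm

/-- For every functional F, the skew-symmetric form B_F has rank 0 or 2; equivalently,
its radical {X | F([X, Y]) = 0 for all Y} has dimension 5 or 3 (the infinitesimal
MD-condition: every coadjoint orbit has dimension 0 or 2). -/
theorem md_condition_g536 (l : ℝ) (hl0 : l ≠ 0) (hl1 : l ≠ 1) (F : Fin 5 → ℝ) :
    ((BFg536 l F).rank = 0 ∨ (BFg536 l F).rank = 2) ∧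
    (Module.finrank ℝ (radg536 l F) = 5 ∨ Module.finrank ℝ (radg536 l F) = 3) := by
  have hrn : (BFg536 l F).rank + Module.finrank ℝ (radg536 l F) = 5 := by
    have h := LinearMap.finrank_range_add_finrank_ker (BFg536 l F).mulVecLin
    rw [ker_eq_rad_g536] at h
    have h5 : Module.finrank ℝ (Fin 5 → ℝ) = 5 := by simp
    rw [h5] at h
    exact h
  by_cases hF : F 2 = 0 ∧ F 3 = 0 ∧ F 4 = 0
  · -- radical is everything
    have htop : radg536 l F = ⊤ := by
      rw [eq_top_iff]
      intro X _
      rw [rad_iff_g536]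
      simp [hF.1, hF.2.1, hF.2.2]
    have h5 : Module.finrank ℝ (radg536 l F) = 5 := by
      rw [htop, finrank_top]; simp
    rw [h5] at hrn ⊢
    exact ⟨Or.inl (by omega), Or.inl rfl⟩
  · -- radical has dimension 3
    have ht : F 2 ≠ 0 ∨ (F 2 + F 3) ≠ 0 ∨ F 4 * l ≠ 0 := by
      push_neg at hF
      by_cases h2 : F 2 = 0
      · by_cases h3 : F 3 = 0
        · exact Or.inr (Or.inr (mul_ne_zero (hF h2 h3) hl0))
        · exact Or.inr (Or.inl (by rw [h2, zero_add]; exact h3))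
      · exact Or.inl h2
    set N : Matrix (Fin 2) (Fin 5) ℝ :=
      !![0, 1, 0, 0, 0; F 2, 0, -(F 2), -(F 2 + F 3), -(F 4 * l)] with hN
    have hNvec : ∀ X : Fin 5 → ℝ, N.mulVec X =
        ![X 1, F 2 * X 0 - F 2 * X 2 - (F 2 + F 3) * X 3 - F 4 * l * X 4] := by
      intro X
      funext i
      fin_cases i <;>
        · simp [hN, Matrix.mulVec, dotProduct, Fin.sum_univ_five]
          try ring
    have hker : radg536 l F = LinearMap.ker N.mulVecLin := by
      ext X
      rw [rad_iff_g536, LinearMap.mem_ker, Matrix.mulVecLin_apply, hNvec]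
      constructor
      · rintro ⟨h1, h2, h3, h4⟩
        have hX1 : X 1 = 0 := by
          rcases ht with h | h | h
          · exact (mul_eq_zero.mp h1).resolve_left h
          · exact (mul_eq_zero.mp h2).resolve_left h
          · exact (mul_eq_zero.mp h3).resolve_left h
        funext i
        fin_cases i
        · simpa using hX1
        · simpa using h4
      · intro h
        have h0 := congrFun h 0
        have h1 := congrFun h 1
        simp only [Matrix.cons_val_zero, Matrix.cons_val_one, Matrix.head_cons,
          Pi.zero_apply] at h0 h1
        exact ⟨by rw [h0, mul_zero], by rw [h0, mul_zero], by rw [h0, mul_zero], h1⟩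
    have hsurj : Function.Surjective N.mulVecLin := by
      intro v
      rcases ht with h | h | h
      · refine ⟨![v 1 / F 2, v 0, 0, 0, 0], ?_⟩
        rw [Matrix.mulVecLin_apply, hNvec]
        funext i
        fin_cases i <;> simp <;> field_simp
      · refine ⟨![0, v 0, 0, -(v 1) / (F 2 + F 3), 0], ?_⟩
        rw [Matrix.mulVecLin_apply, hNvec]
        funext i
        fin_cases i <;> simp <;> field_simp
      · refine ⟨![0, v 0, 0, 0, -(v 1) / (F 4 * l)], ?_⟩
        rw [Matrix.mulVecLin_apply, hNvec]
        funext i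
        fin_cases i <;> simp <;> field_simp [left_ne_zero_of_mul h] <;> ring
    have h3 : Module.finrank ℝ (radg536 l F) = 3 := by
      have h := LinearMap.finrank_range_add_finrank_ker N.mulVecLin
      rw [LinearMap.range_eq_top.mpr hsurj, finrank_top] at h
      have e2 : Module.finrank ℝ (Fin 2 → ℝ) = 2 := by simp
      have e5 : Module.finrank ℝ (Fin 5 → ℝ) = 5 := by simp
      rw [e2, e5] at h
      rw [hker]
      omega
    rw [h3] at hrn ⊢
    exact ⟨Or.inr (by omega), Or.inr rfl⟩
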